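/- arXiv:0708.1551 — 11 statements merged into one kernel-verified Lean document; each statement's English description precedes it below -/
import Mathlib

section
/- Let G be a Lie algebra and R : G → G a linear map satisfying [R(x),R(y)] = R([R(x),y] + [x,R(y)]) for all x,y ∈ G. Then x * y = [R(x), y] defines a left-symmetric algebra structure on G. -/
/-- A solution of the operator form of the classical Yang-Baxter equation gives a
left-symmetric algebra via x * y = [R(x), y]. -/
theorem lsym_from_cybe_operator (F : Type*) [Field F] (G : Type*) [LieRing G] [LieAlgebra F G]
    (R : G →ₗ[F] G)
    (hR : ∀ x y : G, ⁅R x, R y⁆ = R (⁅R x, y⁆ + ⁅x, R y⁆)) :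
    ∀ x y z : G,
      ⁅R ⁅R x, y⁆, z⁆ - ⁅R x, ⁅R y, z⁆⁆ = ⁅R ⁅R y, x⁆, z⁆ - ⁅R y, ⁅R x, z⁆⁆ := by
  intro x y z
  have h : ⁅R ⁅R x, y⁆, z⁆ - ⁅R ⁅R y, x⁆, z⁆ = ⁅⁅R x, R y⁆, z⁆ := by
    rw [hR x y, map_add]
    have : ⁅R y, x⁆ = -⁅x, R y⁆ := by rw [← lie_skew]
    rw [this, map_neg, add_lie, neg_lie]
    abel
  have h2 : ⁅⁅R x, R y⁆, z⁆ = ⁅R x, ⁅R y, z⁆⁆ - ⁅R y, ⁅R x, z⁆⁆ := by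
    rw [lie_lie]
  linear_combination (norm := abel) h.trans h2
end

section
/- Let (A,·) be an associative algebra and R : A → A a Rota-Baxter operator of weight 1, i.e., R(x)·R(y) + R(x·y) = R(R(x)·y + x·R(y)) for all x,y ∈ A. Then x * y = R(x)·y - y·R(x) - x·y defines a left-symmetric algebra structure on A. -/
/-- The product x * y = R(x)·y - y·R(x) - x·y induced by a Rota-Baxter operator of weight 1. -/
def rbProd {F : Type*} [Field F] {A : Type*} [Ring A] [Algebra F A]
    (R : A →ₗ[F] A) (x y : A) : A :=
  R x * y - y * R x - x * y

/-- A Rota-Baxter operator of weight 1 on an associative algebra gives a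
left-symmetric algebra. -/
theorem lsym_from_rota_baxter (F : Type*) [Field F] (A : Type*) [Ring A] [Algebra F A]
    (R : A →ₗ[F] A)
    (hR : ∀ x y : A, R x * R y + R (x * y) = R (R x * y + x * R y)) :
    ∀ x y z : A,
      rbProd R (rbProd R x y) z - rbProd R x (rbProd R y z)
      = rbProd R (rbProd R y x) z - rbProd R y (rbProd R x z) := by
  intro x y z
  have key : R (R x * y - y * R x - x * y)
      = R (R y * x - x * R y - y * x) + (R x * R y - R y * R x) := by
    have h1 := hR x y
    have h2 := hR y x
    rw [map_add] at h1 h2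
    rw [map_sub, map_sub, map_sub, map_sub]
    have : R (R x * y) + R (x * R y) - R (x * y)
        = R (R y * x) + R (y * R x) - R (y * x) + (R x * R y - R y * R x) := by
      rw [← h1, ← h2]; abel
    linear_combination (norm := abel) this
  simp only [rbProd]
  rw [key]
  noncomm_ring
end

section
/- Let V be a complex vector space with a symmetric bilinear form (,) and a a fixed vector of V. Then the product u * v = (u,v)a + (u,a)v defines a left-symmetric algebra structure on V. -/
/-- The product u * v = (u,v)a + (u,a)v on a complex vector space with a symmetric
bilinear form. -/
def burgersProd {V : Type*} [AddCommGroup V] [Module ℂ V]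
    (B : V →ₗ[ℂ] V →ₗ[ℂ] ℂ) (a : V) (u v : V) : V :=
  B u v • a + B u a • v

/-- u * v = (u,v)a + (u,a)v defines a left-symmetric algebra on V. -/
theorem lsym_from_bilinear_form (V : Type*) [AddCommGroup V] [Module ℂ V]
    (B : V →ₗ[ℂ] V →ₗ[ℂ] ℂ) (hB : ∀ u v : V, B u v = B v u) (a : V) :
    ∀ u v w : V,
      burgersProd B a (burgersProd B a u v) w - burgersProd B a u (burgersProd B a v w)
      = burgersProd B a (burgersProd B a v u) w - burgersProd B a v (burgersProd B a u w) := by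
  intro u v w
  simp only [burgersProd, map_add, map_smul, LinearMap.add_apply, LinearMap.smul_apply,
    smul_add, smul_smul, smul_eq_mul]
  rw [hB u v, hB u w, hB u a, hB v w, hB v a]
  module
end

section
/- Let (G,ω) be a symplectic Lie algebra, i.e., ω is a nondegenerate skew-symmetric bilinear form satisfying the 2-cocycle condition ω([x,y],z) + ω([y,z],x) + ω([z,x],y) = 0. Then the product x*y defined by ω(x*y, z) = -ω(y,[x,z]) for all z is a left-symmetric algebra structure on G whose commutator x*y - y*x equals [x,y]. -/
/-- On a symplectic Lie algebra, ω(x*y,z) = -ω(y,[x,z]) defines a compatible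
left-symmetric algebra structure. -/
theorem lsym_on_symplectic_lie_algebra (F : Type*) [Field F]
    (G : Type*) [LieRing G] [LieAlgebra F G] [FiniteDimensional F G]
    (ω : G →ₗ[F] G →ₗ[F] F)
    (hskew : ∀ x y : G, ω x y = -ω y x)
    (hnd : ∀ x : G, (∀ y : G, ω x y = 0) → x = 0)
    (hcoc : ∀ x y z : G, ω ⁅x, y⁆ z + ω ⁅y, z⁆ x + ω ⁅z, x⁆ y = 0)
    (mul : G →ₗ[F] G →ₗ[F] G)
    (hmul : ∀ x y z : G, ω (mul x y) z = -(ω y ⁅x, z⁆)) :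
    (∀ x y z : G,
      mul (mul x y) z - mul x (mul y z) = mul (mul y x) z - mul y (mul x z))
    ∧ (∀ x y : G, mul x y - mul y x = ⁅x, y⁆) := by
  have sep : ∀ a b : G, (∀ w : G, ω a w = ω b w) → a = b := by
    intro a b h
    have h0 : a - b = 0 := by
      apply hnd
      intro y
      simp [LinearMap.sub_apply, h y]
    exact sub_eq_zero.mp h0
  have h2 : ∀ x y : G, mul x y - mul y x = ⁅x, y⁆ := by
    intro x y
    apply sep
    intro w
    have hc := hcoc x y w
    have e1 : ω (mul x y - mul y x) w = -(ω y ⁅x, w⁆) + ω x ⁅y, w⁆ := by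
      simp [LinearMap.sub_apply, hmul, sub_eq_add_neg]
    rw [e1]
    have s1 : ω ⁅y, w⁆ x = -(ω x ⁅y, w⁆) := hskew _ _
    have s2 : ω ⁅w, x⁆ y = -(ω y ⁅w, x⁆) := hskew _ _
    have s3 : ω y ⁅w, x⁆ = -(ω y ⁅x, w⁆) := by
      rw [show (⁅w, x⁆ : G) = -⁅x, w⁆ from (lie_skew w x).symm]
      exact map_neg (ω y) _
    rw [s1, s2, s3] at hc
    linear_combination -hc
  refine ⟨?_, h2⟩
  have key : ∀ x y z : G, mul ⁅x, y⁆ z = mul x (mul y z) - mul y (mul x z) := by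
    intro x y z
    apply sep
    intro w
    have l1 : ω (mul x (mul y z)) w = ω z ⁅y, ⁅x, w⁆⁆ := by
      rw [hmul x (mul y z) w, hmul y z ⁅x, w⁆, neg_neg]
    have l2 : ω (mul y (mul x z)) w = ω z ⁅x, ⁅y, w⁆⁆ := by
      rw [hmul y (mul x z) w, hmul x z ⁅y, w⁆, neg_neg]
    have jac : (⁅⁅x, y⁆, w⁆ : G) = ⁅x, ⁅y, w⁆⁆ - ⁅y, ⁅x, w⁆⁆ := by
      rw [lie_lie]
    rw [hmul, map_sub, LinearMap.sub_apply, l1, l2, jac, map_sub]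
    ring
  intro x y z
  have hm : mul (mul x y) z - mul (mul y x) z = mul x (mul y z) - mul y (mul x z) := by
    rw [← key, ← h2 x y]
    simp [map_sub, LinearMap.sub_apply]
  exact sub_eq_sub_iff_sub_eq_sub.mp hm
end

section
/- Let A be a finite-dimensional left-symmetric algebra and (S,T,V) a bimodule of A. Define S*,T* : A → gl(V*) by ⟨S*(x)u*, v⟩ = -⟨u*, S(x)v⟩ and ⟨T*(x)u*, v⟩ = -⟨u*, T(x)v⟩. Then (S* - T*, -T*, V*) is a bimodule of A. -/
/-- For a bimodule (S,T,V) of a left-symmetric algebra A, (S* - T*, -T*, V*) is a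
bimodule of A, where (S* - T*)(x) = (T(x) - S(x))ᵀ and (-T*)(x) = T(x)ᵀ on the dual. -/
theorem dual_bimodule (F : Type*) [Field F]
    (A : Type*) [AddCommGroup A] [Module F A] [FiniteDimensional F A]
    (V : Type*) [AddCommGroup V] [Module F V]
    (mul : A →ₗ[F] A →ₗ[F] A)
    (hls : ∀ x y z : A,
      mul (mul x y) z - mul x (mul y z) = mul (mul y x) z - mul y (mul x z))
    (S T : A →ₗ[F] V →ₗ[F] V)
    (hb1 : ∀ (x y : A) (v : V),
      S x (S y v) - S (mul x y) v = S y (S x v) - S (mul y x) v)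
    (hb2 : ∀ (x y : A) (v : V),
      S x (T y v) - T y (S x v) = T (mul x y) v - T y (T x v)) :
    (∀ (x y : A) (u : Module.Dual F V),
      (T x - S x).dualMap ((T y - S y).dualMap u)
        - (T (mul x y) - S (mul x y)).dualMap u
      = (T y - S y).dualMap ((T x - S x).dualMap u)
        - (T (mul y x) - S (mul y x)).dualMap u)
    ∧ (∀ (x y : A) (u : Module.Dual F V),
      (T x - S x).dualMap ((T y).dualMap u) - (T y).dualMap ((T x - S x).dualMap u)
      = (T (mul x y)).dualMap u - (T y).dualMap ((T x).dualMap u)) := by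
  constructor
  · intro x y u
    ext v
    have h1 := congrArg u (hb1 x y v)
    have h2 := congrArg u (hb2 x y v)
    have h3 := congrArg u (hb2 y x v)
    simp only [map_sub] at h1 h2 h3
    simp only [LinearMap.dualMap_apply, LinearMap.sub_apply, map_sub]
    linear_combination h2 - h3 - h1
  · intro x y u
    ext v
    have h2 := congrArg u (hb2 x y v)
    simp only [map_sub] at h2
    simp only [LinearMap.dualMap_apply, LinearMap.sub_apply, map_sub]
    linear_combination h2
end

section
/- Let (A,·) and (B,∘) be left-symmetric algebras with linear maps l_A,r_A : A → gl(B) and l_B,r_B : B → gl(A) such that (l_A,r_A) is a bimodule of A and (l_B,r_B) is a bimodule of B, satisfying the four compatibility conditions (3.6)-(3.9) of a matched pair of left-symmetric algebras. Then the product (x+a)*(y+b) = (x·y + l_B(a)y + r_B(b)x) + (a∘b + l_A(x)b + r_A(y)a) defines a left-symmetric algebra structure on A ⊕ B. -/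
/-- The product on A ⊕ B associated to a matched pair of left-symmetric algebras:
(x+a)*(y+b) = (x·y + l_B(a)y + r_B(b)x) + (a∘b + l_A(x)b + r_A(y)a). -/
def mpProd {F : Type*} [Field F] {A : Type*} [AddCommGroup A] [Module F A]
    {B : Type*} [AddCommGroup B] [Module F B]
    (mulA : A →ₗ[F] A →ₗ[F] A) (mulB : B →ₗ[F] B →ₗ[F] B)
    (lA rA : A →ₗ[F] B →ₗ[F] B) (lB rB : B →ₗ[F] A →ₗ[F] A)
    (p q : A × B) : A × B :=
  (mulA p.1 q.1 + lB p.2 q.1 + rB q.2 p.1, mulB p.2 q.2 + lA p.1 q.2 + rA q.1 p.2)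

set_option maxHeartbeats 1000000 in
/-- A matched pair of left-symmetric algebras yields a left-symmetric algebra
structure on A ⊕ B. -/
theorem matched_pair_lsym (F : Type*) [Field F]
    (A : Type*) [AddCommGroup A] [Module F A]
    (B : Type*) [AddCommGroup B] [Module F B]
    (mulA : A →ₗ[F] A →ₗ[F] A) (mulB : B →ₗ[F] B →ₗ[F] B)
    (lA rA : A →ₗ[F] B →ₗ[F] B) (lB rB : B →ₗ[F] A →ₗ[F] A)
    (hlsA : ∀ x y z : A,
      mulA (mulA x y) z - mulA x (mulA y z) = mulA (mulA y x) z - mulA y (mulA x z))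
    (hlsB : ∀ a b c : B,
      mulB (mulB a b) c - mulB a (mulB b c) = mulB (mulB b a) c - mulB b (mulB a c))
    (hbA1 : ∀ (x y : A) (b : B),
      lA x (lA y b) - lA (mulA x y) b = lA y (lA x b) - lA (mulA y x) b)
    (hbA2 : ∀ (x y : A) (b : B),
      lA x (rA y b) - rA y (lA x b) = rA (mulA x y) b - rA y (rA x b))
    (hbB1 : ∀ (a b : B) (x : A),
      lB a (lB b x) - lB (mulB a b) x = lB b (lB a x) - lB (mulB b a) x)
    (hbB2 : ∀ (a b : B) (x : A),
      lB a (rB b x) - rB b (lB a x) = rB (mulB a b) x - rB b (rB a x))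
    (h36 : ∀ (x : A) (a b : B),
      rA x (mulB a b - mulB b a)
      = rA (lB b x) a - rA (lB a x) b + mulB a (rA x b) - mulB b (rA x a))
    (h37 : ∀ (x : A) (a b : B),
      lA x (mulB a b)
      = -lA (lB a x - rB a x) b + mulB (lA x a - rA x a) b
        + rA (rB b x) a + mulB a (lA x b))
    (h38 : ∀ (a : B) (x y : A),
      rB a (mulA x y - mulA y x)
      = rB (lA y a) x - rB (lA x a) y + mulA x (rB a y) - mulA y (rB a x))
    (h39 : ∀ (a : B) (x y : A),
      lB a (mulA x y)
      = -lB (lA x a - rA x a) y + mulA (lB a x - rB a x) y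
        + rB (rA y a) x + mulA x (lB a y)) :
    ∀ p q r : A × B,
      mpProd mulA mulB lA rA lB rB (mpProd mulA mulB lA rA lB rB p q) r
        - mpProd mulA mulB lA rA lB rB p (mpProd mulA mulB lA rA lB rB q r)
      = mpProd mulA mulB lA rA lB rB (mpProd mulA mulB lA rA lB rB q p) r
        - mpProd mulA mulB lA rA lB rB q (mpProd mulA mulB lA rA lB rB p r) := by
  intro p q r
  obtain ⟨x, a⟩ := p
  obtain ⟨y, b⟩ := q
  obtain ⟨z, c⟩ := r
  have h38' := fun (a : B) (x y : A) => h38 a x y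
  have h37' := fun (x : A) (a b : B) => h37 x a b
  have h39' := fun (a : B) (x y : A) => h39 a x y
  simp only [map_sub, LinearMap.sub_apply] at h38' h36 h37' h39'
  refine Prod.ext ?_ ?_ <;>
    simp only [mpProd, Prod.fst_sub, Prod.snd_sub, map_add, map_sub, map_neg,
      LinearMap.add_apply, LinearMap.sub_apply, LinearMap.neg_apply]
  · linear_combination (norm := abel)
      hlsA x y z + h38' c x y - hbB1 a b z + hbB2 b c x - hbB2 a c y
        + h39' b x z - h39' a y z
  · linear_combination (norm := abel)
      hlsB a b c + h36 z a b - hbA1 x y c + hbA2 y z a - hbA2 x z b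
        + h37' y a c - h37' x b c
end

section
/- Let (A,B,l_A,r_A,l_B,r_B) be a matched pair of left-symmetric algebras. Then (G(A), G(B), l_A - r_A, l_B - r_B) is a matched pair of Lie algebras. -/
/-- A matched pair of left-symmetric algebras (A,B,l_A,r_A,l_B,r_B) gives a matched
pair of Lie algebras (G(A), G(B), l_A - r_A, l_B - r_B). -/
theorem matched_pair_lie_of_lsym (F : Type*) [Field F]
    (A : Type*) [AddCommGroup A] [Module F A]
    (B : Type*) [AddCommGroup B] [Module F B]
    (mulA : A →ₗ[F] A →ₗ[F] A) (mulB : B →ₗ[F] B →ₗ[F] B)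
    (lA rA : A →ₗ[F] B →ₗ[F] B) (lB rB : B →ₗ[F] A →ₗ[F] A)
    (hlsA : ∀ x y z : A,
      mulA (mulA x y) z - mulA x (mulA y z) = mulA (mulA y x) z - mulA y (mulA x z))
    (hlsB : ∀ a b c : B,
      mulB (mulB a b) c - mulB a (mulB b c) = mulB (mulB b a) c - mulB b (mulB a c))
    (hbA1 : ∀ (x y : A) (b : B),
      lA x (lA y b) - lA (mulA x y) b = lA y (lA x b) - lA (mulA y x) b)
    (hbA2 : ∀ (x y : A) (b : B),
      lA x (rA y b) - rA y (lA x b) = rA (mulA x y) b - rA y (rA x b))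
    (hbB1 : ∀ (a b : B) (x : A),
      lB a (lB b x) - lB (mulB a b) x = lB b (lB a x) - lB (mulB b a) x)
    (hbB2 : ∀ (a b : B) (x : A),
      lB a (rB b x) - rB b (lB a x) = rB (mulB a b) x - rB b (rB a x))
    (h36 : ∀ (x : A) (a b : B),
      rA x (mulB a b - mulB b a)
      = rA (lB b x) a - rA (lB a x) b + mulB a (rA x b) - mulB b (rA x a))
    (h37 : ∀ (x : A) (a b : B),
      lA x (mulB a b)
      = -lA (lB a x - rB a x) b + mulB (lA x a - rA x a) b
        + rA (rB b x) a + mulB a (lA x b))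
    (h38 : ∀ (a : B) (x y : A),
      rB a (mulA x y - mulA y x)
      = rB (lA y a) x - rB (lA x a) y + mulA x (rB a y) - mulA y (rB a x))
    (h39 : ∀ (a : B) (x y : A),
      lB a (mulA x y)
      = -lB (lA x a - rA x a) y + mulA (lB a x - rB a x) y
        + rB (rA y a) x + mulA x (lB a y)) :
    -- ρ = l_A - r_A is a representation of G(A)
    ((∀ (x y : A) (b : B),
        (lA x - rA x) ((lA y - rA y) b) - (lA y - rA y) ((lA x - rA x) b)
        = (lA (mulA x y - mulA y x) - rA (mulA x y - mulA y x)) b)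
    -- μ = l_B - r_B is a representation of G(B)
    ∧ (∀ (a b : B) (x : A),
        (lB a - rB a) ((lB b - rB b) x) - (lB b - rB b) ((lB a - rB a) x)
        = (lB (mulB a b - mulB b a) - rB (mulB a b - mulB b a)) x)
    -- equation (2.17) for (G(A), G(B), ρ, μ)
    ∧ (∀ (x : A) (a b : B),
        (lA x - rA x) (mulB a b - mulB b a)
          - (mulB ((lA x - rA x) a) b - mulB b ((lA x - rA x) a))
          - (mulB a ((lA x - rA x) b) - mulB ((lA x - rA x) b) a)
          + (lA ((lB a - rB a) x) - rA ((lB a - rB a) x)) b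
          - (lA ((lB b - rB b) x) - rA ((lB b - rB b) x)) a = 0)
    -- equation (2.18) for (G(A), G(B), ρ, μ)
    ∧ (∀ (a : B) (x y : A),
        (lB a - rB a) (mulA x y - mulA y x)
          - (mulA ((lB a - rB a) x) y - mulA y ((lB a - rB a) x))
          - (mulA x ((lB a - rB a) y) - mulA ((lB a - rB a) y) x)
          + (lB ((lA x - rA x) a) - rB ((lA x - rA x) a)) y
          - (lB ((lA y - rA y) a) - rB ((lA y - rA y) a)) x = 0)) := by
  refine ⟨?_, ?_, ?_, ?_⟩
  · intro x y b
    simp only [LinearMap.sub_apply, map_sub]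
    linear_combination (norm := module) hbA1 x y b - hbA2 x y b + hbA2 y x b
  · intro a b x
    simp only [LinearMap.sub_apply, map_sub]
    linear_combination (norm := module) hbB1 a b x - hbB2 a b x + hbB2 b a x
  · intro x a b
    have e1 := h36 x a b
    have e2 := h37 x a b
    have e3 := h37 x b a
    simp only [LinearMap.sub_apply, map_sub] at e1 e2 e3 ⊢
    linear_combination (norm := module) -e1 + e2 - e3
  · intro a x y
    have e1 := h38 a x y
    have e2 := h39 a x y
    have e3 := h39 a y x
    simp only [LinearMap.sub_apply, map_sub] at e1 e2 e3 ⊢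
    linear_combination (norm := module) -e1 + e2 - e3
end

section
/- Let A be a vector space and α : A → A ⊗ A a linear map. Then the dual map α* : A* ⊗ A* → A* defines a left-symmetric algebra structure on A* if and only if J_α = 0, where J_α(x) = (α⊗id)α(x) - (id⊗α)α(x) - (σ⊗id)(α⊗id)α(x) + (σ⊗id)(id⊗α)α(x) for all x ∈ A. -/
open TensorProduct

variable {F : Type*} [Field F] {A : Type*} [AddCommGroup A] [Module F A]

/-- The product on the dual A* induced by a comultiplication α : A → A ⊗ A:
⟨a∘b, x⟩ = ⟨a⊗b, α(x)⟩. -/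
noncomputable def dualProd (α : A →ₗ[F] A ⊗[F] A)
    (a b : Module.Dual F A) : Module.Dual F A :=
  b ∘ₗ (TensorProduct.lid F A).toLinearMap ∘ₗ (a.rTensor A) ∘ₗ α

/-- The map J_α(x) = (α⊗id)α(x) - (id⊗α)α(x) - (σ⊗id)(α⊗id)α(x) + (σ⊗id)(id⊗α)α(x),
with all terms regarded in A ⊗ (A ⊗ A) via the associator. -/
noncomputable def Jmap (α : A →ₗ[F] A ⊗[F] A) (x : A) : A ⊗[F] (A ⊗[F] A) :=
  let assoc := (TensorProduct.assoc F A A A).toLinearMap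
  let swap12 : A ⊗[F] (A ⊗[F] A) →ₗ[F] A ⊗[F] (A ⊗[F] A) :=
    assoc ∘ₗ ((TensorProduct.comm F A A).toLinearMap.rTensor A)
      ∘ₗ (TensorProduct.assoc F A A A).symm.toLinearMap
  assoc ((α.rTensor A) (α x)) - (α.lTensor A) (α x)
    - swap12 (assoc ((α.rTensor A) (α x))) + swap12 ((α.lTensor A) (α x))

noncomputable def g2 (b c : Module.Dual F A) : A ⊗[F] A →ₗ[F] F :=
  (TensorProduct.lid F F).toLinearMap ∘ₗ TensorProduct.map b c

noncomputable def pair3 (a b c : Module.Dual F A) : A ⊗[F] (A ⊗[F] A) →ₗ[F] F :=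
  (TensorProduct.lid F F).toLinearMap ∘ₗ TensorProduct.map a (g2 b c)

lemma g2_tmul (b c : Module.Dual F A) (y z : A) : g2 b c (y ⊗ₜ[F] z) = b y * c z := by
  simp [g2, smul_eq_mul]

lemma pair3_tmul (a b c : Module.Dual F A) (x : A) (s : A ⊗[F] A) :
    pair3 a b c (x ⊗ₜ[F] s) = a x * g2 b c s := by
  simp [pair3, smul_eq_mul]

lemma dualProd_apply (α : A →ₗ[F] A ⊗[F] A) (a b : Module.Dual F A) (x : A) :
    dualProd α a b x = g2 a b (α x) := by
  simp only [dualProd, LinearMap.comp_apply]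
  induction α x using TensorProduct.induction_on with
  | zero => simp
  | tmul y z => simp [g2_tmul, smul_eq_mul, mul_comm]
  | add s t hs ht => simp only [map_add]; rw [hs, ht]

lemma pair3_assoc (a b c : Module.Dual F A) (s : A ⊗[F] A) (z : A) :
    pair3 a b c ((TensorProduct.assoc F A A A) (s ⊗ₜ[F] z)) = g2 a b s * c z := by
  induction s using TensorProduct.induction_on with
  | zero => simp
  | tmul p q => simp only [assoc_tmul, pair3_tmul, g2_tmul]; ring
  | add s t hs ht => simp only [add_tmul, map_add, hs, ht]; ring

lemma pair3_swap (a b c : Module.Dual F A) (t : A ⊗[F] (A ⊗[F] A)) :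
    pair3 a b c (((TensorProduct.assoc F A A A).toLinearMap ∘ₗ
      ((TensorProduct.comm F A A).toLinearMap.rTensor A) ∘ₗ
      (TensorProduct.assoc F A A A).symm.toLinearMap) t) = pair3 b a c t := by
  induction t using TensorProduct.induction_on with
  | zero => simp
  | tmul x s =>
    induction s using TensorProduct.induction_on with
    | zero => simp
    | tmul y z =>
      simp only [LinearMap.comp_apply, LinearEquiv.coe_coe, assoc_symm_tmul,
        LinearMap.rTensor_tmul, comm_tmul, assoc_tmul, pair3_tmul, g2_tmul]
      ring
    | add s t hs ht => simp only [tmul_add, map_add]; rw [hs, ht]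
  | add s t hs ht => simp only [map_add]; rw [hs, ht]

lemma keyL (α : A →ₗ[F] A ⊗[F] A) (a b c : Module.Dual F A) (t : A ⊗[F] A) :
    pair3 a b c ((TensorProduct.assoc F A A A).toLinearMap ((α.rTensor A) t))
      = g2 (dualProd α a b) c t := by
  induction t using TensorProduct.induction_on with
  | zero => simp
  | tmul y z =>
    rw [LinearMap.rTensor_tmul]
    simp only [LinearEquiv.coe_coe]
    rw [pair3_assoc, g2_tmul, dualProd_apply]
  | add s t hs ht => simp only [map_add]; rw [hs, ht]

lemma keyR (α : A →ₗ[F] A ⊗[F] A) (a b c : Module.Dual F A) (t : A ⊗[F] A) :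
    pair3 a b c ((α.lTensor A) t) = g2 a (dualProd α b c) t := by
  induction t using TensorProduct.induction_on with
  | zero => simp
  | tmul y z =>
    rw [LinearMap.lTensor_tmul, pair3_tmul, g2_tmul, dualProd_apply]
  | add s t hs ht => simp only [map_add]; rw [hs, ht]

lemma pairJ (α : A →ₗ[F] A ⊗[F] A) (a b c : Module.Dual F A) (x : A) :
    pair3 a b c (Jmap α x)
      = dualProd α (dualProd α a b) c x - dualProd α a (dualProd α b c) x
        - dualProd α (dualProd α b a) c x + dualProd α b (dualProd α a c) x := by
  simp only [Jmap, map_sub, map_add, LinearMap.comp_apply]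
  have hsw : ∀ u : A ⊗[F] (A ⊗[F] A),
      pair3 a b c ((TensorProduct.assoc F A A A).toLinearMap
        ((LinearMap.rTensor A (TensorProduct.comm F A A).toLinearMap)
          ((TensorProduct.assoc F A A A).symm.toLinearMap u))) = pair3 b a c u :=
    fun u => pair3_swap a b c u
  rw [hsw, hsw]
  rw [keyL, keyR, keyL, keyR, ← dualProd_apply, ← dualProd_apply, ← dualProd_apply, ← dualProd_apply]

lemma pair3_sep (t : A ⊗[F] (A ⊗[F] A))
    (h : ∀ a b c : Module.Dual F A, pair3 a b c t = 0) : t = 0 := by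
  let bA := Module.Basis.ofVectorSpace F A
  let B := bA.tensorProduct (bA.tensorProduct bA)
  apply (Module.Basis.forall_coord_eq_zero_iff B).mp
  rintro ⟨i, j, k⟩
  have coordeq : B.coord (i, (j, k))
      = pair3 (bA.coord i) (bA.coord j) (bA.coord k) := by
    apply B.ext
    rintro ⟨i', j', k'⟩
    simp only [B, Module.Basis.tensorProduct_apply, Module.Basis.tensorProduct_repr_tmul_apply, pair3_tmul, g2_tmul, Module.Basis.coord_apply,
      Module.Basis.repr_self, Finsupp.single_apply, Prod.mk.injEq]
    simp only [Finsupp.single_apply, smul_eq_mul]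
    ring
  rw [coordeq]
  exact h _ _ _

/-- α* defines a left-symmetric algebra structure on A* if and only if J_α = 0. -/
theorem dual_lsym_iff_J_eq_zero [FiniteDimensional F A] (α : A →ₗ[F] A ⊗[F] A) :
    (∀ a b c : Module.Dual F A,
      dualProd α (dualProd α a b) c - dualProd α a (dualProd α b c)
      = dualProd α (dualProd α b a) c - dualProd α b (dualProd α a c))
    ↔ (∀ x : A, Jmap α x = 0) := by
  constructor
  · intro h x
    apply pair3_sep
    intro a b c
    rw [pairJ]
    have := LinearMap.congr_fun (h a b c) x
    simp only [LinearMap.sub_apply] at this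
    linear_combination this

  · intro h a b c
    ext x
    have hp := pairJ α a b c x
    rw [h x, map_zero] at hp
    simp only [LinearMap.sub_apply]
    linear_combination -hp
end

section
/- Let A be a finite-dimensional left-symmetric algebra and r ∈ A ⊗ A symmetric and nondegenerate (as a map r : A* → A). Then r satisfies the S-equation -r₁₂·r₁₃ + r₁₂·r₂₃ + [r₁₃,r₂₃] = 0 if and only if the bilinear form B(x,y) = ⟨r⁻¹(x), y⟩ on A is a 2-cocycle of A, i.e., B(x·y, z) - B(x, y·z) = B(y·x, z) - B(y, x·z) for all x,y,z ∈ A. -/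
open TensorProduct

variable {F : Type*} [Field F] {A : Type*} [AddCommGroup A] [Module F A]

/-- The linear map A* → A induced by r = Σᵢ aᵢ ⊗ bᵢ ∈ A ⊗ A : r(f) = Σᵢ f(bᵢ) • aᵢ. -/
noncomputable def rOp {n : ℕ} (a b : Fin n → A) : Module.Dual F A →ₗ[F] A :=
  ∑ i, (LinearMap.applyₗ (b i)).smulRight (a i)

/-- Evaluation of `A ⊗ (A ⊗ A)` against a triple of dual vectors. -/
noncomputable def ev3 (f g h : Module.Dual F A) : A ⊗[F] (A ⊗[F] A) →ₗ[F] F :=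
  TensorProduct.lift ((LinearMap.mul F F).compl₁₂ f
    (TensorProduct.lift ((LinearMap.mul F F).compl₁₂ g h)))

@[simp] lemma ev3_tmul (f g h : Module.Dual F A) (x y z : A) :
    ev3 f g h (x ⊗ₜ[F] (y ⊗ₜ[F] z)) = f x * (g y * h z) := by
  simp [ev3]

lemma ev3_zero (t : A ⊗[F] (A ⊗[F] A))
    (H : ∀ f g h : Module.Dual F A, ev3 f g h t = 0) : t = 0 := by
  let c := Module.Free.chooseBasis F A
  let bT := c.tensorProduct (c.tensorProduct c)
  have key : ∀ p, bT.repr t p = ev3 (c.coord p.1) (c.coord p.2.1) (c.coord p.2.2) t := by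
    rintro ⟨i, j, k⟩
    have h2 : (Finsupp.lapply (i, j, k) ∘ₗ (bT.repr : A ⊗[F] (A ⊗[F] A) →ₗ[F] _))
        = ev3 (c.coord i) (c.coord j) (c.coord k) := by
      ext x y z
      simp [bT, Module.Basis.tensorProduct_repr_tmul_apply]
      ring
    exact LinearMap.congr_fun h2 t
  have : bT.repr t = 0 := Finsupp.ext fun p => by rw [key]; exact H _ _ _
  exact (LinearEquiv.map_eq_zero_iff _).mp this

/-- For a nondegenerate symmetric r, the S-equation holds iff the inverse of r,
regarded as a bilinear form B(x,y) = ⟨r⁻¹x, y⟩, is a 2-cocycle of A. -/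
theorem S_equation_iff_two_cocycle [FiniteDimensional F A]
    (mul : A →ₗ[F] A →ₗ[F] A)
    (hls : ∀ x y z : A,
      mul (mul x y) z - mul x (mul y z) = mul (mul y x) z - mul y (mul x z))
    (n : ℕ) (a b : Fin n → A)
    (hsym : ∑ i, a i ⊗ₜ[F] b i = ∑ i, b i ⊗ₜ[F] a i)
    (hnd : Function.Bijective (rOp (F := F) a b))
    (B : A → A → F)
    (hB : ∀ (f : Module.Dual F A) (y : A), B (rOp a b f) y = f y) :
    (-(∑ i, ∑ j, (mul (a i) (a j)) ⊗ₜ[F] ((b i) ⊗ₜ[F] (b j)))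
      + ∑ i, ∑ j, (a i) ⊗ₜ[F] ((mul (b i) (a j)) ⊗ₜ[F] (b j))
      + ∑ i, ∑ j, (a i) ⊗ₜ[F] ((a j) ⊗ₜ[F] (mul (b i) (b j) - mul (b j) (b i)))
      = 0)
    ↔ (∀ x y z : A,
      B (mul x y) z - B x (mul y z) = B (mul y x) z - B y (mul x z)) := by
  classical
  have hT1 : ∀ f : Module.Dual F A, rOp (F := F) a b f = ∑ i, f (b i) • a i := by
    intro f; simp [rOp]
  have hT2 : ∀ f : Module.Dual F A, rOp (F := F) a b f = ∑ i, f (a i) • b i := by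
    intro f
    have h := congrArg (TensorProduct.lift (((LinearMap.lsmul F A).comp f).flip)) hsym
    simp only [map_sum, TensorProduct.lift.tmul, LinearMap.flip_apply, LinearMap.coe_comp,
      Function.comp_apply, LinearMap.lsmul_apply] at h
    rw [hT1 f]; exact h
  set T := rOp (F := F) a b with hTdef
  let e := LinearEquiv.ofBijective T hnd
  have he : ∀ f, e f = T f := fun f => rfl
  have hfx : ∀ x w, B x w = (e.symm x) w := by
    intro x w
    conv_lhs => rw [← e.apply_symm_apply x]
    rw [he]
    exact hB _ w
  have hBsymm : ∀ x y, B x y = B y x := by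
    intro x y
    rw [hfx x y, hfx y x]
    conv_lhs => rw [← e.apply_symm_apply y, he]
    conv_rhs => rw [← e.apply_symm_apply x, he]
    rw [hT2 (e.symm y), hT1 (e.symm x), map_sum, map_sum]
    exact Finset.sum_congr rfl fun i _ => by simp [mul_comm]
  -- evaluation of the three tensor sums
  have pexp : ∀ (φ : Module.Dual F A) (u v : Fin n → A) (p q : Fin n → F),
      φ (mul (∑ i, p i • u i) (∑ j, q j • v j))
        = ∑ i, ∑ j, p i * (q j * φ (mul (u i) (v j))) := by
    intro φ u v p q
    have step : ∀ w : A, φ (mul (∑ i, p i • u i) w) = ∑ i, p i * φ (mul (u i) w) := by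
      intro w
      simp [map_sum, map_smul, LinearMap.sum_apply, LinearMap.smul_apply, smul_eq_mul]
    rw [step]
    refine Finset.sum_congr rfl fun i _ => ?_
    simp [map_sum, map_smul, smul_eq_mul, Finset.mul_sum]
  have h1 : ∀ f g h : Module.Dual F A,
      ev3 f g h (∑ i, ∑ j, (mul (a i) (a j)) ⊗ₜ[F] ((b i) ⊗ₜ[F] (b j)))
      = f (mul (T g) (T h)) := by
    intro f g h
    rw [hT1 g, hT1 h, pexp f a a (fun i => g (b i)) (fun j => h (b j))]
    simp only [map_sum, ev3_tmul]
    exact Finset.sum_congr rfl fun i _ => Finset.sum_congr rfl fun j _ => by ring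
  have h2 : ∀ f g h : Module.Dual F A,
      ev3 f g h (∑ i, ∑ j, (a i) ⊗ₜ[F] ((mul (b i) (a j)) ⊗ₜ[F] (b j)))
      = g (mul (T f) (T h)) := by
    intro f g h
    rw [hT2 f, hT1 h, pexp g b a (fun i => f (a i)) (fun j => h (b j))]
    simp only [map_sum, ev3_tmul]
    exact Finset.sum_congr rfl fun i _ => Finset.sum_congr rfl fun j _ => by ring
  have h3 : ∀ f g h : Module.Dual F A,
      ev3 f g h (∑ i, ∑ j, (a i) ⊗ₜ[F] ((a j) ⊗ₜ[F] (mul (b i) (b j) - mul (b j) (b i))))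
      = h (mul (T f) (T g)) - h (mul (T g) (T f)) := by
    intro f g h
    rw [hT2 f, hT2 g]
    have hA := pexp h b b (fun i => f (a i)) (fun j => g (a j))
    have hB' : h (mul (∑ i, g (a i) • b i) (∑ j, f (a j) • b j))
        = ∑ i, ∑ j, f (a i) * (g (a j) * h (mul (b j) (b i))) := by
      rw [pexp h b b (fun i => g (a i)) (fun j => f (a j)), Finset.sum_comm]
      exact Finset.sum_congr rfl fun i _ => Finset.sum_congr rfl fun j _ => by ring
    rw [hA, hB', ← Finset.sum_sub_distrib]
    simp only [map_sum, ev3_tmul, map_sub]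
    refine Finset.sum_congr rfl fun i _ => ?_
    rw [← Finset.sum_sub_distrib]
    exact Finset.sum_congr rfl fun j _ => by ring
  have heval : ∀ f g h : Module.Dual F A,
      ev3 f g h (-(∑ i, ∑ j, (mul (a i) (a j)) ⊗ₜ[F] ((b i) ⊗ₜ[F] (b j)))
        + ∑ i, ∑ j, (a i) ⊗ₜ[F] ((mul (b i) (a j)) ⊗ₜ[F] (b j))
        + ∑ i, ∑ j, (a i) ⊗ₜ[F] ((a j) ⊗ₜ[F] (mul (b i) (b j) - mul (b j) (b i))))
      = -f (mul (T g) (T h)) + g (mul (T f) (T h))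
        + (h (mul (T f) (T g)) - h (mul (T g) (T f))) := by
    intro f g h
    rw [map_add, map_add, map_neg, h1, h2, h3]
  constructor
  · intro h0 x y z
    set f := e.symm x with hf
    set g := e.symm y with hg
    set h' := e.symm z with hh
    have hx : T f = x := e.apply_symm_apply x
    have hy : T g = y := e.apply_symm_apply y
    have hz : T h' = z := e.apply_symm_apply z
    have hS := heval f g h'
    rw [h0, map_zero, hx, hy, hz] at hS
    have hfw : ∀ w, f w = B x w := fun w => (hfx x w).symm
    have hgw : ∀ w, g w = B y w := fun w => (hfx y w).symm
    have hhw : ∀ w, h' w = B z w := fun w => (hfx z w).symm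
    rw [hfw, hgw, hhw, hhw] at hS
    rw [hBsymm (mul x y) z, hBsymm (mul y x) z]
    linear_combination hS.symm
  · intro hc
    apply ev3_zero
    intro f g h
    rw [heval]
    have hcz := hc (T f) (T g) (T h)
    rw [hBsymm (mul (T f) (T g)) (T h), hBsymm (mul (T g) (T f)) (T h)] at hcz
    have e1 : ∀ w, f w = B (T f) w := fun w => (hB f w).symm
    have e2 : ∀ w, g w = B (T g) w := fun w => (hB g w).symm
    have e3 : ∀ w, h w = B (T h) w := fun w => (hB h w).symm
    rw [e1, e2, e3, e3]
    linear_combination hcz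
end

section
/- Let A be a finite-dimensional left-symmetric algebra and r ∈ A ⊗ A symmetric. Then r is a solution of the S-equation in A if and only if the induced linear map r : A* → A satisfies [r(a*), r(b*)] = r(L*(r(a*))b* - L*(r(b*))a*) for all a*, b* ∈ A*, i.e., r is an O-operator associated to the dual L* of the left regular representation. -/
open TensorProduct

variable {F : Type*} [Field F] {A : Type*} [AddCommGroup A] [Module F A]

/-- Contraction of the first tensor factor against a dual vector. -/
noncomputable def contr {M : Type*} [AddCommGroup M] [Module F M] :
    (A ⊗[F] M) →ₗ[F] Module.Dual F A →ₗ[F] M :=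
  (dualTensorHom F (Module.Dual F A) M) ∘ₗ
    (LinearMap.rTensor M (Module.Dual.eval F A))

lemma contr_tmul {M : Type*} [AddCommGroup M] [Module F M] (x : A) (m : M)
    (f : Module.Dual F A) : contr (x ⊗ₜ[F] m) f = f x • m := by
  simp [contr]

lemma contr_inj [FiniteDimensional F A] {M : Type*} [AddCommGroup M] [Module F M]
    (t : A ⊗[F] M) (h : ∀ f : Module.Dual F A, contr t f = 0) : t = 0 := by
  have h1 : (contr (F := F) (A := A) (M := M)) t = 0 := LinearMap.ext h
  have e1 : Function.Injective (contr (F := F) (A := A) (M := M)) := by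
    have : (contr (F := F) (A := A) (M := M)) =
        (dualTensorHomEquiv F (Module.Dual F A) M).toLinearMap ∘ₗ
          (LinearEquiv.rTensor M (Module.evalEquiv F A)).toLinearMap := rfl
    rw [this]
    exact (dualTensorHomEquiv F (Module.Dual F A) M).injective.comp
      (LinearEquiv.rTensor M (Module.evalEquiv F A)).injective
  exact e1 (by simpa using h1)

lemma rOp_apply {n : ℕ} (a b : Fin n → A) (f : Module.Dual F A) :
    rOp a b f = ∑ i, f (b i) • a i := by
  simp [rOp]

lemma key_identity (mul : A →ₗ[F] A →ₗ[F] A) (n : ℕ) (a b : Fin n → A)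
    (hsym : ∑ i, a i ⊗ₜ[F] b i = ∑ i, b i ⊗ₜ[F] a i)
    (f g : Module.Dual F A) :
    ∑ i, ∑ j, (- (f (mul (a i) (a j)) • g (b i) • b j)
        + f (a i) • g (mul (b i) (a j)) • b j
        + f (a i) • g (a j) • (mul (b i) (b j) - mul (b j) (b i)))
    = (mul (rOp a b f) (rOp a b g) - mul (rOp a b g) (rOp a b f))
      - rOp a b ((-(mul (rOp a b f)).dualMap) g - (-(mul (rOp a b g)).dualMap) f) := by
  have sswap : ∀ (φ : Module.Dual F A) (T : A →ₗ[F] A),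
      ∑ i, φ (a i) • T (b i) = ∑ i, φ (b i) • T (a i) := by
    intro φ T
    have := congrArg (TensorProduct.lift (φ.smulRight T)) hsym
    simpa [map_sum] using this
  -- T1 : swap in inner index, then transpose
  have hT1 : ∑ i, ∑ j, f (mul (a i) (a j)) • g (b i) • b j
      = ∑ i, ∑ j, g (b j) • f (mul (a j) (b i)) • a i := by
    calc ∑ i, ∑ j, f (mul (a i) (a j)) • g (b i) • b j
        = ∑ i, ∑ j, g (b i) • f (mul (a i) (b j)) • a j := by
          refine Finset.sum_congr rfl fun i _ => ?_
          have h := sswap (f ∘ₗ mul (a i)) (g (b i) • LinearMap.id)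
          simp only [LinearMap.comp_apply, LinearMap.smul_apply, LinearMap.id_apply] at h
          calc ∑ j, f (mul (a i) (a j)) • g (b i) • b j
              = ∑ j, f (mul (a i) (a j)) • (g (b i) • b j) := rfl
            _ = ∑ j, f (mul (a i) (b j)) • (g (b i) • a j) := h
            _ = ∑ j, g (b i) • f (mul (a i) (b j)) • a j := by
                refine Finset.sum_congr rfl fun j _ => ?_; module
      _ = ∑ i, ∑ j, g (b j) • f (mul (a j) (b i)) • a i := Finset.sum_comm
  -- T2 : swap inner, swap outer
  have hT2 : ∑ i, ∑ j, f (a i) • g (mul (b i) (a j)) • b j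
      = ∑ i, ∑ j, f (b j) • g (mul (a j) (b i)) • a i := by
    calc ∑ i, ∑ j, f (a i) • g (mul (b i) (a j)) • b j
        = ∑ i, ∑ j, f (a i) • g (mul (b i) (b j)) • a j := by
          refine Finset.sum_congr rfl fun i _ => ?_
          have h := sswap (g ∘ₗ mul (b i)) (f (a i) • LinearMap.id)
          simp only [LinearMap.comp_apply, LinearMap.smul_apply, LinearMap.id_apply] at h
          calc ∑ j, f (a i) • g (mul (b i) (a j)) • b j
              = ∑ j, g (mul (b i) (a j)) • (f (a i) • b j) := by
                refine Finset.sum_congr rfl fun j _ => ?_; module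
            _ = ∑ j, g (mul (b i) (b j)) • (f (a i) • a j) := h
            _ = ∑ j, f (a i) • g (mul (b i) (b j)) • a j := by
                refine Finset.sum_congr rfl fun j _ => ?_; module
      _ = ∑ j, ∑ i, f (a i) • g (mul (b i) (b j)) • a j := Finset.sum_comm
      _ = ∑ j, ∑ i, f (b i) • g (mul (a i) (b j)) • a j := by
          refine Finset.sum_congr rfl fun j _ => ?_
          have h := sswap f ((g ∘ₗ mul.flip (b j)).smulRight (a j))
          simpa only [LinearMap.smulRight_apply, LinearMap.comp_apply,
            LinearMap.flip_apply] using h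
  -- T3 : swap inner, then swap outer
  have hT3 : ∑ i, ∑ j, f (a i) • g (a j) • (mul (b i) (b j) - mul (b j) (b i))
      = ∑ i, ∑ j, f (b i) • g (b j) • (mul (a i) (a j) - mul (a j) (a i)) := by
    calc ∑ i, ∑ j, f (a i) • g (a j) • (mul (b i) (b j) - mul (b j) (b i))
        = ∑ i, ∑ j, g (b j) • (f (a i) • (mul (b i) (a j) - mul (a j) (b i))) := by
          refine Finset.sum_congr rfl fun i _ => ?_
          have h := sswap g (f (a i) • (mul (b i) - (mul.flip (b i))))
          simp only [LinearMap.smul_apply, LinearMap.sub_apply, LinearMap.flip_apply] at h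
          calc ∑ j, f (a i) • g (a j) • (mul (b i) (b j) - mul (b j) (b i))
              = ∑ j, g (a j) • (f (a i) • (mul (b i) (b j) - mul (b j) (b i))) := by
                refine Finset.sum_congr rfl fun j _ => ?_
                rw [smul_comm]
            _ = ∑ j, g (b j) • (f (a i) • (mul (b i) (a j) - mul (a j) (b i))) := h
      _ = ∑ j, ∑ i, g (b j) • (f (a i) • (mul (b i) (a j) - mul (a j) (b i))) :=
          Finset.sum_comm
      _ = ∑ j, ∑ i, g (b j) • (f (b i) • (mul (a i) (a j) - mul (a j) (a i))) := by
          refine Finset.sum_congr rfl fun j _ => ?_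
          have h := sswap f (g (b j) • ((mul.flip (a j)) - mul (a j)))
          simp only [LinearMap.smul_apply, LinearMap.sub_apply, LinearMap.flip_apply] at h
          calc ∑ i, g (b j) • (f (a i) • (mul (b i) (a j) - mul (a j) (b i)))
              = ∑ i, f (a i) • (g (b j) • (mul (b i) (a j) - mul (a j) (b i))) := by
                refine Finset.sum_congr rfl fun i _ => ?_
                rw [smul_comm]
            _ = ∑ i, f (b i) • (g (b j) • (mul (a i) (a j) - mul (a j) (a i))) := h
            _ = ∑ i, g (b j) • (f (b i) • (mul (a i) (a j) - mul (a j) (a i))) := by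
                refine Finset.sum_congr rfl fun i _ => ?_
                rw [smul_comm]
      _ = ∑ i, ∑ j, g (b j) • (f (b i) • (mul (a i) (a j) - mul (a j) (a i))) :=
          Finset.sum_comm
      _ = ∑ i, ∑ j, f (b i) • g (b j) • (mul (a i) (a j) - mul (a j) (a i)) := by
          refine Finset.sum_congr rfl fun i _ => Finset.sum_congr rfl fun j _ => ?_
          rw [smul_comm]
  have e1 : mul (rOp a b f) (rOp a b g)
      = ∑ i, ∑ j, f (b i) • g (b j) • mul (a i) (a j) := by
    simp only [rOp_apply, map_sum, map_smul, LinearMap.sum_apply, LinearMap.smul_apply,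
      Finset.smul_sum]
    rw [Finset.sum_comm]
    exact Finset.sum_congr rfl fun i _ => Finset.sum_congr rfl fun j _ => smul_comm _ _ _
  have e2 : mul (rOp a b g) (rOp a b f)
      = ∑ i, ∑ j, g (b i) • f (b j) • mul (a i) (a j) := by
    simp only [rOp_apply, map_sum, map_smul, LinearMap.sum_apply, LinearMap.smul_apply,
      Finset.smul_sum]
    rw [Finset.sum_comm]
    exact Finset.sum_congr rfl fun i _ => Finset.sum_congr rfl fun j _ => smul_comm _ _ _
  have e3 : rOp a b ((-(mul (rOp a b f)).dualMap) g - (-(mul (rOp a b g)).dualMap) f)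
      = -(∑ i, ∑ j, f (b j) • g (mul (a j) (b i)) • a i)
        + ∑ i, ∑ j, g (b j) • f (mul (a j) (b i)) • a i := by
    simp only [LinearMap.sub_apply, LinearMap.neg_apply, LinearMap.dualMap_apply,
      sub_neg_eq_add]
    rw [rOp_apply]
    simp only [LinearMap.add_apply, LinearMap.neg_apply, LinearMap.dualMap_apply]
    simp only [rOp_apply, map_sum, map_smul, LinearMap.sum_apply, LinearMap.smul_apply,
      smul_eq_mul, map_sub, map_neg, add_smul, neg_smul, Finset.sum_smul, mul_smul,
      Finset.sum_add_distrib, Finset.sum_neg_distrib]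
  have hW2 : ∑ i, ∑ j, f (b i) • g (b j) • mul (a j) (a i)
      = ∑ i, ∑ j, g (b i) • f (b j) • mul (a i) (a j) := by
    rw [show (∑ i, ∑ j, f (b i) • g (b j) • mul (a j) (a i))
        = ∑ j, ∑ i, f (b i) • g (b j) • mul (a j) (a i) from Finset.sum_comm]
    refine Finset.sum_congr rfl fun i _ => Finset.sum_congr rfl fun j _ => ?_
    rw [smul_comm]
  rw [e1, e2, e3]
  simp only [Finset.sum_add_distrib, Finset.sum_neg_distrib]
  rw [hT1, hT2, hT3]
  simp only [smul_sub, Finset.sum_sub_distrib]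
  rw [hW2]
  abel

lemma contr_big (mul : A →ₗ[F] A →ₗ[F] A) (n : ℕ) (a b : Fin n → A)
    (f g : Module.Dual F A) :
    contr (contr
     (-(∑ i, ∑ j, (mul (a i) (a j)) ⊗ₜ[F] ((b i) ⊗ₜ[F] (b j)))
      + ∑ i, ∑ j, (a i) ⊗ₜ[F] ((mul (b i) (a j)) ⊗ₜ[F] (b j))
      + ∑ i, ∑ j, (a i) ⊗ₜ[F] ((a j) ⊗ₜ[F] (mul (b i) (b j) - mul (b j) (b i)))) f) g
    = ∑ i, ∑ j, (- (f (mul (a i) (a j)) • g (b i) • b j)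
        + f (a i) • g (mul (b i) (a j)) • b j
        + f (a i) • g (a j) • (mul (b i) (b j) - mul (b j) (b i))) := by
  simp only [map_sum, map_add, map_neg, LinearMap.sum_apply, LinearMap.add_apply,
    LinearMap.neg_apply, contr_tmul, map_smul, LinearMap.smul_apply, Finset.sum_add_distrib,
    Finset.sum_neg_distrib]

/-- A symmetric r is a solution of the S-equation iff r : A* → A is an O-operator
associated to the dual L* of the left regular representation. -/
theorem S_equation_iff_O_operator [FiniteDimensional F A]
    (mul : A →ₗ[F] A →ₗ[F] A)
    (hls : ∀ x y z : A,
      mul (mul x y) z - mul x (mul y z) = mul (mul y x) z - mul y (mul x z))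
    (n : ℕ) (a b : Fin n → A)
    (hsym : ∑ i, a i ⊗ₜ[F] b i = ∑ i, b i ⊗ₜ[F] a i) :
    (-(∑ i, ∑ j, (mul (a i) (a j)) ⊗ₜ[F] ((b i) ⊗ₜ[F] (b j)))
      + ∑ i, ∑ j, (a i) ⊗ₜ[F] ((mul (b i) (a j)) ⊗ₜ[F] (b j))
      + ∑ i, ∑ j, (a i) ⊗ₜ[F] ((a j) ⊗ₜ[F] (mul (b i) (b j) - mul (b j) (b i)))
      = 0)
    ↔ (∀ f g : Module.Dual F A,
      mul (rOp a b f) (rOp a b g) - mul (rOp a b g) (rOp a b f)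
      = rOp a b ((-(mul (rOp a b f)).dualMap) g - (-(mul (rOp a b g)).dualMap) f)) := by
  constructor
  · intro hE f g
    have h0 := congrArg (fun t => contr (contr t f) g) hE
    simp only [map_zero, LinearMap.zero_apply] at h0
    rw [contr_big] at h0
    rw [key_identity mul n a b hsym f g] at h0
    exact sub_eq_zero.mp h0
  · intro h
    apply contr_inj
    intro f
    apply contr_inj
    intro g
    rw [contr_big, key_identity mul n a b hsym f g, sub_eq_zero]
    exact h f g
end

section
/- Let G be a Lie algebra, ρ : G → gl(V) a representation, and T : V → G an O-operator associated to ρ. Then u ∘ v = ρ(T(u))v defines a left-symmetric algebra structure on V, and T is a homomorphism from the sub-adjacent Lie algebra of (V,∘) to G. -/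
/-- An O-operator T associated to a representation ρ induces a left-symmetric
algebra structure u ∘ v = ρ(T u)v on V, and T is a Lie algebra homomorphism from
the sub-adjacent Lie algebra of (V,∘) to G. -/
theorem O_operator_gives_lsym (F : Type*) [Field F]
    (G : Type*) [LieRing G] [LieAlgebra F G]
    (V : Type*) [AddCommGroup V] [Module F V]
    (ρ : G →ₗ[F] V →ₗ[F] V)
    (hrep : ∀ (x y : G) (v : V), ρ ⁅x, y⁆ v = ρ x (ρ y v) - ρ y (ρ x v))
    (T : V →ₗ[F] G)
    (hO : ∀ u v : V, ⁅T u, T v⁆ = T (ρ (T u) v - ρ (T v) u)) :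
    (∀ u v w : V,
      ρ (T (ρ (T u) v)) w - ρ (T u) (ρ (T v) w)
      = ρ (T (ρ (T v) u)) w - ρ (T v) (ρ (T u) w))
    ∧ (∀ u v : V, T (ρ (T u) v - ρ (T v) u) = ⁅T u, T v⁆) := by
  refine ⟨fun u v w => ?_, fun u v => (hO u v).symm⟩
  have h := hrep (T u) (T v) w
  rw [hO u v, map_sub, map_sub, LinearMap.sub_apply] at h
  exact sub_eq_sub_iff_sub_eq_sub.mpr h
end
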